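/- (Associativity of sequencing) Let G be any GSOS language containing the binary sequencing operation ';' specified, for each action a ∈ Act, by the rules x →^a z / x;y →^a z;y and {x ↛^b (for all b ∈ Act), y →^a z} / x;y →^a z. Then Algbis(G) ⊨ (x;y);z = x;(y;z); in particular, for all closed Σ_G-terms p, q, r: (p;q);r ↔_G p;(q;r). -/

import Mathlib

/-!
Common infrastructure for formalizing results about GSOS languages
("A rule-matching bisimulation method", Aceto et al.).

* Variables are natural numbers (a countably infinite set).
* Terms over a signature given by a type `Op` of operation symbols with
  arities `ar : Op → ℕ`.
* GSOS rules and ruloids, the induced (sound and supported) transition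
  relation, bisimilarity, ruloid systems, valid ruloids, initial transition
  formulae and rule-matching bisimulation.
-/

namespace GSOSPaper

/-- Terms over operation symbols `Op` with arity function `ar`;
variables are natural numbers. -/
inductive Tm (Op : Type) (ar : Op → ℕ) : Type
  | var : ℕ → Tm Op ar
  | app : (f : Op) → (Fin (ar f) → Tm Op ar) → Tm Op ar

namespace Tm

variable {Op : Type} {ar : Op → ℕ}

/-- The set of variables occurring in a term. -/
def vars : Tm Op ar → Set ℕ
  | .var x => {x}
  | .app _ ts => ⋃ i, (ts i).vars

/-- The set of operation symbols occurring in a term. -/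
def ops : Tm Op ar → Set Op
  | .var _ => ∅
  | .app f ts => insert f (⋃ i, (ts i).ops)

/-- A term is closed if it contains no variables. -/
def IsClosed (t : Tm Op ar) : Prop := t.vars = ∅

/-- Applying a substitution to a term. -/
def subst (σ : ℕ → Tm Op ar) : Tm Op ar → Tm Op ar
  | .var x => σ x
  | .app f ts => .app f fun i => (ts i).subst σ

/-- Renaming the variables of a term. -/
def rename (r : ℕ → ℕ) (t : Tm Op ar) : Tm Op ar :=
  t.subst fun x => .var (r x)

/-- The number of occurrences of the variable `v` in a term. -/
def count (v : ℕ) : Tm Op ar → ℕ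
  | .var x => if x = v then 1 else 0
  | .app _ ts => ∑ i, (ts i).count v

/-- Transporting a term along an arity-preserving map of operation symbols. -/
def map {Op' : Type} {ar' : Op' → ℕ} (ι : Op → Op') (h : ∀ f, ar' (ι f) = ar f) :
    Tm Op ar → Tm Op' ar'
  | .var x => .var x
  | .app f ts => .app (ι f) fun i => (ts (Fin.cast (h f) i)).map ι h

end Tm

/-- A closed `S`-substitution: every variable is sent to a closed term all of
whose operation symbols come from `S`. -/
def ClosedSub {Op : Type} {ar : Op → ℕ} (S : Set Op) (σ : ℕ → Tm Op ar) : Prop :=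
  ∀ x, (σ x).IsClosed ∧ (σ x).ops ⊆ S

/-- A rule (this data type is used both for GSOS rules and for ruloids):
positive premises `x →^a y` (coded as `(x, a, y)`), negative premises
`x ↛^a` (coded as `(x, a)`), a source term, an action, and a target term. -/
structure Rule (Op : Type) (ar : Op → ℕ) (Act : Type) where
  pos : Set (ℕ × Act × ℕ)
  neg : Set (ℕ × Act)
  src : Tm Op ar
  act : Act
  tgt : Tm Op ar

namespace Rule

variable {Op : Type} {ar : Op → ℕ} {Act : Type}

/-- The source variables of a rule/ruloid: the variables of its source. -/
def sourceVars (ρ : Rule Op ar Act) : Set ℕ := ρ.src.vars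

/-- The target variables of a rule/ruloid: the right-hand sides of its
positive premises. -/
def targetVars (ρ : Rule Op ar Act) : Set ℕ := {y | ∃ x a, (x, a, y) ∈ ρ.pos}

/-- Well-formedness of a rule/ruloid: finitely many premises; the left-hand
sides of premises are source variables; the target variables are distinct
from the source variables and pairwise distinct (each target variable occurs
in exactly one positive premise); the variables of the target of the
conclusion occur among the source and target variables. -/
def WF (ρ : Rule Op ar Act) : Prop :=
  ρ.pos.Finite ∧ ρ.neg.Finite ∧
  (∀ ⦃x a y⦄, (x, a, y) ∈ ρ.pos → x ∈ ρ.sourceVars ∧ y ∉ ρ.sourceVars) ∧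
  (∀ ⦃x a⦄, (x, a) ∈ ρ.neg → x ∈ ρ.sourceVars) ∧
  (∀ ⦃x a y x' a'⦄, (x, a, y) ∈ ρ.pos → (x', a', y) ∈ ρ.pos → x = x' ∧ a = a') ∧
  ρ.tgt.vars ⊆ ρ.sourceVars ∪ ρ.targetVars

/-- A rule is in GSOS format if it is well formed and its source is
`f(x₁, …, x_l)` for an operation symbol `f` and distinct variables `x_i`. -/
def IsGSOSForm (ρ : Rule Op ar Act) : Prop :=
  ρ.WF ∧ ∃ (f : Op) (x : Fin (ar f) → ℕ), Function.Injective x ∧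
    ρ.src = Tm.app f fun i => Tm.var (x i)

/-- A rule is a de Simone rule if it has no negative premises, at most one
positive premise per source variable, a target in which every variable occurs
at most once, and a target containing no source variable that occurs in a
positive premise. -/
def IsDeSimone (ρ : Rule Op ar Act) : Prop :=
  ρ.neg = ∅ ∧
  (∀ ⦃x a y a' y'⦄, (x, a, y) ∈ ρ.pos → (x, a', y') ∈ ρ.pos → a = a' ∧ y = y') ∧
  (∀ v, ρ.tgt.count v ≤ 1) ∧
  (∀ ⦃x a y⦄, (x, a, y) ∈ ρ.pos → x ∉ ρ.tgt.vars)

/-- `ρ` has principal operation `f`. -/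
def PrincipalIs (ρ : Rule Op ar Act) (f : Op) : Prop := ∃ ts, ρ.src = Tm.app f ts

/-- A rule is non-inheriting if no source variable occurs in the target of
its conclusion. -/
def NonInheriting (ρ : Rule Op ar Act) : Prop := ∀ x ∈ ρ.sourceVars, x ∉ ρ.tgt.vars

/-- Renaming the variables of a rule/ruloid. -/
def rename (r : ℕ → ℕ) (ρ : Rule Op ar Act) : Rule Op ar Act where
  pos := (fun p : ℕ × Act × ℕ => (r p.1, p.2.1, r p.2.2)) '' ρ.pos
  neg := (fun p : ℕ × Act => (r p.1, p.2)) '' ρ.neg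
  src := ρ.src.rename r
  act := ρ.act
  tgt := ρ.tgt.rename r

/-- Transporting a rule along an arity-preserving map of operation symbols. -/
def map {Op' : Type} {ar' : Op' → ℕ} (ι : Op → Op') (h : ∀ f, ar' (ι f) = ar f)
    (ρ : Rule Op ar Act) : Rule Op' ar' Act where
  pos := ρ.pos
  neg := ρ.neg
  src := ρ.src.map ι h
  act := ρ.act
  tgt := ρ.tgt.map ι h

end Rule

/-- A language: a set of operation symbols together with a set of rules.
(Well-formedness is the separate predicate `Lang.WellFormed`.) -/
structure Lang (Op : Type) (ar : Op → ℕ) (Act : Type) where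
  ops : Set Op
  rules : Set (Rule Op ar Act)

/-- A GSOS language: finitely many operations, finitely many rules, and all
rules in GSOS format over the signature. -/
def Lang.WellFormed {Op : Type} {ar : Op → ℕ} {Act : Type} (L : Lang Op ar Act) : Prop :=
  L.ops.Finite ∧ L.rules.Finite ∧
  ∀ ρ ∈ L.rules, ρ.IsGSOSForm ∧ ρ.src.ops ⊆ L.ops ∧ ρ.tgt.ops ⊆ L.ops

variable {Op : Type} {ar : Op → ℕ} {Act : Type}

/-- `σ` satisfies the antecedents of `ρ` with respect to the transition
relation `Tr`. -/
def Satisfies (Tr : Tm Op ar → Act → Tm Op ar → Prop) (σ : ℕ → Tm Op ar)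
    (ρ : Rule Op ar Act) : Prop :=
  (∀ ⦃x a y⦄, (x, a, y) ∈ ρ.pos → Tr (σ x) a (σ y)) ∧
  (∀ ⦃x a⦄, (x, a) ∈ ρ.neg → ∀ q, ¬ Tr (σ x) a q)

/-- A rule/ruloid is sound for `Tr` (relative to closed `S`-substitutions) if
every closed substitution satisfying its antecedents yields an instance of
its conclusion that is in `Tr`. -/
def Rule.Sound (Tr : Tm Op ar → Act → Tm Op ar → Prop) (S : Set Op)
    (ρ : Rule Op ar Act) : Prop :=
  ∀ σ, ClosedSub S σ → Satisfies Tr σ ρ →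
    Tr (ρ.src.subst σ) ρ.act (ρ.tgt.subst σ)

/-- The rule/ruloid `ρ` supports the transition `p →^a q`. -/
def Supports (Tr : Tm Op ar → Act → Tm Op ar → Prop) (S : Set Op)
    (ρ : Rule Op ar Act) (p : Tm Op ar) (a : Act) (q : Tm Op ar) : Prop :=
  ∃ σ, ClosedSub S σ ∧ Satisfies Tr σ ρ ∧
    ρ.src.subst σ = p ∧ ρ.act = a ∧ ρ.tgt.subst σ = q

/-- `Tr` is the transition relation induced by the language `L`: it is sound
(every rule instance with satisfied antecedents is a transition) and
supported (every transition is supported by some rule of `L`).  For a GSOS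
language there is a unique such relation. -/
def IsTransRel (L : Lang Op ar Act) (Tr : Tm Op ar → Act → Tm Op ar → Prop) : Prop :=
  (∀ ρ ∈ L.rules, ρ.Sound Tr L.ops) ∧
  (∀ p a q, Tr p a q → ∃ ρ ∈ L.rules, Supports Tr L.ops ρ p a q)

/-- A rule is junk if it supports no transition. -/
def IsJunk (L : Lang Op ar Act) (Tr : Tm Op ar → Act → Tm Op ar → Prop)
    (ρ : Rule Op ar Act) : Prop :=
  ∀ p a q, ¬ Supports Tr L.ops ρ p a q

/-- `R` is a bisimulation with respect to `Tr`. -/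
def IsBisim (Tr : Tm Op ar → Act → Tm Op ar → Prop)
    (R : Tm Op ar → Tm Op ar → Prop) : Prop :=
  Symmetric R ∧ ∀ p q, R p q → ∀ a p', Tr p a p' → ∃ q', Tr q a q' ∧ R p' q'

/-- Bisimilarity with respect to `Tr`. -/
def Bisim (Tr : Tm Op ar → Act → Tm Op ar → Prop) (p q : Tm Op ar) : Prop :=
  ∃ R, IsBisim Tr R ∧ R p q

/-- `ρ` is a ruloid for the context `D` (over the operations `S`). -/
def IsRuloidFor (S : Set Op) (ρ : Rule Op ar Act) (D : Tm Op ar) : Prop :=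
  ρ.WF ∧ ρ.src = D ∧ ρ.tgt.ops ⊆ S

/-- A set `R` of ruloids is supporting for the context `D` and the action `c`:
whenever a closed instance of `D` has a `c`-transition, that transition is an
instance of the conclusion of a ruloid of `R` under a closed substitution
satisfying its antecedents. -/
def SupportingFor (Tr : Tm Op ar → Act → Tm Op ar → Prop) (S : Set Op)
    (R : Set (Rule Op ar Act)) (D : Tm Op ar) (c : Act) : Prop :=
  ∀ σ₀ q, ClosedSub S σ₀ → Tr (D.subst σ₀) c q →
    ∃ ρ ∈ R, ∃ σ, ClosedSub S σ ∧ Satisfies Tr σ ρ ∧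
      ρ.src.subst σ = D.subst σ₀ ∧ ρ.act = c ∧ ρ.tgt.subst σ = q

/-- `rul` assigns to each term `P` a finite set `rul P` of ruloids for `P`
that is sound and supporting for `P` and each action (such an assignment
exists by the Ruloid Theorem). -/
def IsRuloidSystem (L : Lang Op ar Act) (Tr : Tm Op ar → Act → Tm Op ar → Prop)
    (rul : Tm Op ar → Set (Rule Op ar Act)) : Prop :=
  ∀ P : Tm Op ar,
    (rul P).Finite ∧
    (∀ ρ ∈ rul P, IsRuloidFor L.ops ρ P) ∧
    (∀ ρ ∈ rul P, ρ.Sound Tr L.ops) ∧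
    (∀ c : Act, SupportingFor Tr L.ops {ρ | ρ ∈ rul P ∧ ρ.act = c} P c)

/-- The ruloid system `rul` is junk-free: every ruloid in it supports some
transition, i.e. its antecedents are satisfiable by a closed substitution. -/
def JunkFree (L : Lang Op ar Act) (Tr : Tm Op ar → Act → Tm Op ar → Prop)
    (rul : Tm Op ar → Set (Rule Op ar Act)) : Prop :=
  ∀ P, ∀ ρ ∈ rul P, ∃ σ, ClosedSub L.ops σ ∧ Satisfies Tr σ ρ

/-- `ρ` is a valid ruloid for `P`: it is obtained from a ruloid `ρ' ∈ rul P`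
by an injective renaming of its target variables to variables that are not
among the source variables of `ρ`. -/
def IsValidRuloid (rul : Tm Op ar → Set (Rule Op ar Act)) (P : Tm Op ar)
    (ρ : Rule Op ar Act) : Prop :=
  ∃ ρ' ∈ rul P, ∃ r : ℕ → ℕ,
    (∀ x, x ∉ ρ'.targetVars → r x = x) ∧
    Set.InjOn r ρ'.targetVars ∧
    (∀ y ∈ ρ'.targetVars, r y ∉ ρ.sourceVars) ∧
    ρ = ρ'.rename r

/-- `σ` satisfies `hyps(ρ)`, the conjunction of the initial transition
formulae corresponding to the antecedents of `ρ` (the atom `x →^a` for a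
positive premise `x →^a y`, and its negation for a negative premise). -/
def HypsSat (Tr : Tm Op ar → Act → Tm Op ar → Prop) (σ : ℕ → Tm Op ar)
    (ρ : Rule Op ar Act) : Prop :=
  (∀ ⦃x a y⦄, (x, a, y) ∈ ρ.pos → ∃ q, Tr (σ x) a q) ∧
  (∀ ⦃x a⦄, (x, a) ∈ ρ.neg → ∀ q, ¬ Tr (σ x) a q)

/-- `R` is a rule-matching bisimulation (Definition 5.1). -/
def IsRMBisim (L : Lang Op ar Act) (Tr : Tm Op ar → Act → Tm Op ar → Prop)
    (rul : Tm Op ar → Set (Rule Op ar Act))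
    (R : Tm Op ar → Tm Op ar → Prop) : Prop :=
  Symmetric R ∧
  ∀ P Q, R P Q → ∀ ρ ∈ rul P,
    ∃ J : Set (Rule Op ar Act), J.Finite ∧
      (∀ ρ' ∈ J, IsValidRuloid rul Q ρ') ∧
      (∀ ρ' ∈ J,
        ρ'.act = ρ.act ∧
        R ρ.tgt ρ'.tgt ∧
        (ρ'.targetVars ∪ ρ.targetVars) ∩ (ρ.sourceVars ∪ ρ'.sourceVars) = ∅ ∧
        (∀ y ∈ ρ.targetVars ∩ ρ'.targetVars,
          ∃ x, x ∈ ρ.sourceVars ∩ ρ'.sourceVars ∧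
            ∃ b, (x, b, y) ∈ ρ.pos ∧ (x, b, y) ∈ ρ'.pos)) ∧
      (∀ σ, ClosedSub L.ops σ → HypsSat Tr σ ρ → ∃ ρ' ∈ J, HypsSat Tr σ ρ')

/-- Rule-matching bisimilarity. -/
def RMBisim (L : Lang Op ar Act) (Tr : Tm Op ar → Act → Tm Op ar → Prop)
    (rul : Tm Op ar → Set (Rule Op ar Act)) (P Q : Tm Op ar) : Prop :=
  ∃ R, IsRMBisim L Tr rul R ∧ R P Q

/-- Initial transition formulae: propositional logic over atoms `x →^a`. -/
inductive TF (Act : Type) : Type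
  | tru : TF Act
  | atom : ℕ → Act → TF Act
  | not : TF Act → TF Act
  | and : TF Act → TF Act → TF Act

/-- Satisfaction of an initial transition formula by a substitution. -/
def TF.Sat (Tr : Tm Op ar → Act → Tm Op ar → Prop) (σ : ℕ → Tm Op ar) :
    TF Act → Prop
  | .tru => True
  | .atom x a => ∃ q, Tr (σ x) a q
  | .not F => ¬ TF.Sat Tr σ F
  | .and F F' => TF.Sat Tr σ F ∧ TF.Sat Tr σ F'

/-- Semantic entailment `⊨ F ⇒ F'` over closed `S`-substitutions. -/
def Entails (S : Set Op) (Tr : Tm Op ar → Act → Tm Op ar → Prop)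
    (F F' : TF Act) : Prop :=
  ∀ σ, ClosedSub S σ → TF.Sat Tr σ F → TF.Sat Tr σ F'

/-- `L'` (over operations `Op'`) is a disjoint extension of `L` (over `Op`),
along the arity-preserving injection `ι`: the signature and rules of `L'`
include those of `L`, and `L'` has no new rules for the operations of `L`. -/
def IsDisjointExtension {Op' : Type} {ar' : Op' → ℕ} (ι : Op → Op')
    (h : ∀ f, ar' (ι f) = ar f) (L' : Lang Op' ar' Act) (L : Lang Op ar Act) : Prop :=
  Function.Injective ι ∧
  (∀ f ∈ L.ops, ι f ∈ L'.ops) ∧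
  (∀ ρ ∈ L.rules, ρ.map ι h ∈ L'.rules) ∧
  (∀ ρ' ∈ L'.rules, (∃ f ∈ L.ops, ρ'.PrincipalIs (ι f)) → ∃ ρ ∈ L.rules, ρ' = ρ.map ι h)

/-- The term `f(t, u)` for a binary operation symbol `f`. -/
def binT (f : Op) (t u : Tm Op ar) : Tm Op ar :=
  Tm.app f fun i => if (i : ℕ) = 0 then t else u

/-- The term `f` for a constant symbol `f`. -/
def constT (f : Op) : Tm Op ar := Tm.app f fun _ => Tm.var 0

/-- The term `f(t)` for a unary operation symbol `f`. -/
def unT (f : Op) (t : Tm Op ar) : Tm Op ar := Tm.app f fun _ => t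

/-- The sequencing rule `x →^a z / x ; y →^a z ; y`. -/
def seqRule1 (sq : Op) (a : Act) : Rule Op ar Act :=
  ⟨{(0, a, 2)}, ∅, binT sq (.var 0) (.var 1), a, binT sq (.var 2) (.var 1)⟩

/-- The sequencing rule `x ↛^b (∀ b ∈ Act), y →^a z / x ; y →^a z`. -/
def seqRule2 (sq : Op) (a : Act) : Rule Op ar Act :=
  ⟨{(1, a, 2)}, {p : ℕ × Act | p.1 = 0}, binT sq (.var 0) (.var 1), a, .var 2⟩

section AssocAux

variable {Op : Type} {ar : Op → ℕ} {Act : Type}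

lemma subst_binT (f : Op) (t u : Tm Op ar) (σ : ℕ → Tm Op ar) :
    (binT f t u).subst σ = binT f (t.subst σ) (u.subst σ) := by
  simp only [binT, Tm.subst]
  congr 1
  funext i
  split <;> rfl

lemma binT_inj {f : Op} (har : ar f = 2) {t u t' u' : Tm Op ar}
    (h : binT f t u = binT f t' u') : t = t' ∧ u = u' := by
  simp only [binT] at h
  injection h with h1 h2
  constructor
  · have := congrFun h2 ⟨0, by omega⟩
    simpa using this
  · have := congrFun h2 ⟨1, by omega⟩
    simpa using this

lemma closed_subst {σ : ℕ → Tm Op ar} (hσ : ∀ x, (σ x).IsClosed) (t : Tm Op ar) :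
    (t.subst σ).IsClosed := by
  induction t with
  | var x => exact hσ x
  | app f ts ih =>
    simp only [Tm.subst, Tm.IsClosed, Tm.vars, Set.iUnion_eq_empty]
    exact fun i => ih i

lemma ops_subst {σ : ℕ → Tm Op ar} {S : Set Op} (hσ : ∀ x, (σ x).ops ⊆ S)
    {t : Tm Op ar} (ht : t.ops ⊆ S) : (t.subst σ).ops ⊆ S := by
  induction t with
  | var x => exact hσ x
  | app f ts ih =>
    simp only [Tm.subst, Tm.ops, Set.insert_subset_iff, Set.iUnion_subset_iff] at *
    exact ⟨ht.1, fun i => ih i (ht.2 i)⟩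

lemma good_binT {S : Set Op} {f : Op} (hf : f ∈ S) {t u : Tm Op ar}
    (ht : t.IsClosed ∧ t.ops ⊆ S) (hu : u.IsClosed ∧ u.ops ⊆ S) :
    (binT f t u).IsClosed ∧ (binT f t u).ops ⊆ S := by
  constructor
  · simp only [binT, Tm.IsClosed, Tm.vars, Set.iUnion_eq_empty]
    intro i
    split
    · exact ht.1
    · exact hu.1
  · simp only [binT, Tm.ops, Set.insert_subset_iff, Set.iUnion_subset_iff]
    refine ⟨hf, fun i => ?_⟩
    split
    · exact ht.2
    · exact hu.2

lemma trans_good {L : Lang Op ar Act} (hL : L.WellFormed)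
    {Tr : Tm Op ar → Act → Tm Op ar → Prop} (hTr : IsTransRel L Tr)
    {p : Tm Op ar} {a : Act} {q : Tm Op ar} (h : Tr p a q) :
    q.IsClosed ∧ q.ops ⊆ L.ops := by
  obtain ⟨ρ, hρ, σ, hσ, hsat, hsrc, hact, htgt⟩ := hTr.2 _ _ _ h
  rw [← htgt]
  exact ⟨closed_subst (fun x => (hσ x).1) _,
    ops_subst (fun x => (hσ x).2) ((hL.2.2 ρ hρ).2.2)⟩

lemma seq_bwd1 {L : Lang Op ar Act}
    {Tr : Tm Op ar → Act → Tm Op ar → Prop} (hTr : IsTransRel L Tr) {sq : Op}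
    (hmem1 : ∀ c : Act, seqRule1 sq c ∈ L.rules)
    {t u t' : Tm Op ar} {a : Act}
    (ht : t.IsClosed ∧ t.ops ⊆ L.ops) (hu : u.IsClosed ∧ u.ops ⊆ L.ops)
    (ht' : t'.IsClosed ∧ t'.ops ⊆ L.ops)
    (h : Tr t a t') : Tr (binT sq t u) a (binT sq t' u) := by
  have hs := hTr.1 _ (hmem1 a) (fun n => if n = 0 then t else if n = 1 then u else t')
    ?_ ?_
  · have e1 : (seqRule1 (ar := ar) sq a).src.subst
        (fun n => if n = 0 then t else if n = 1 then u else t') = binT sq t u := by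
      show (binT sq (.var 0) (.var 1)).subst _ = _
      rw [subst_binT]; rfl
    have e2 : (seqRule1 (ar := ar) sq a).tgt.subst
        (fun n => if n = 0 then t else if n = 1 then u else t') = binT sq t' u := by
      show (binT sq (.var 2) (.var 1)).subst _ = _
      rw [subst_binT]; rfl
    rw [e1, e2] at hs
    exact hs
  · intro x
    dsimp only
    split
    · exact ht
    split
    · exact hu
    · exact ht'
  · constructor
    · intro x b y hxy
      simp only [seqRule1, Set.mem_singleton_iff, Prod.mk.injEq] at hxy
      obtain ⟨rfl, rfl, rfl⟩ := hxy
      simpa using h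
    · intro x b hxb
      exact absurd hxb (Set.notMem_empty _)


lemma seq_bwd2 {L : Lang Op ar Act}
    {Tr : Tm Op ar → Act → Tm Op ar → Prop} (hTr : IsTransRel L Tr) {sq : Op}
    (hmem2 : ∀ c : Act, seqRule2 sq c ∈ L.rules)
    {t u u' : Tm Op ar} {a : Act}
    (ht : t.IsClosed ∧ t.ops ⊆ L.ops) (hu : u.IsClosed ∧ u.ops ⊆ L.ops)
    (hu' : u'.IsClosed ∧ u'.ops ⊆ L.ops)
    (hstuck : ∀ b w, ¬ Tr t b w)
    (h : Tr u a u') : Tr (binT sq t u) a u' := by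
  have hs := hTr.1 _ (hmem2 a) (fun n => if n = 0 then t else if n = 1 then u else u')
    ?_ ?_
  · have e1 : (seqRule2 (ar := ar) sq a).src.subst
        (fun n => if n = 0 then t else if n = 1 then u else u') = binT sq t u := by
      show (binT sq (.var 0) (.var 1)).subst _ = _
      rw [subst_binT]; rfl
    rw [e1] at hs
    exact hs
  · intro x
    dsimp only
    split
    · exact ht
    split
    · exact hu
    · exact hu'
  · constructor
    · intro x b y hxy
      simp only [seqRule2, Set.mem_singleton_iff, Prod.mk.injEq] at hxy
      obtain ⟨rfl, rfl, rfl⟩ := hxy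
      simpa using h
    · intro x b hxb
      have hx : x = 0 := hxb
      subst hx
      intro w
      simpa using hstuck b w

lemma seq_fwd {L : Lang Op ar Act} (hL : L.WellFormed)
    {Tr : Tm Op ar → Act → Tm Op ar → Prop} (hTr : IsTransRel L Tr)
    {sq : Op} (har : ar sq = 2)
    (honly : ∀ ρ ∈ L.rules, ρ.PrincipalIs sq →
      ∃ a : Act, ρ = seqRule1 sq a ∨ ρ = seqRule2 sq a)
    {t u : Tm Op ar} {a : Act} {v : Tm Op ar} (h : Tr (binT sq t u) a v) :
    (∃ t', Tr t a t' ∧ v = binT sq t' u) ∨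
    ((∀ b w, ¬ Tr t b w) ∧ Tr u a v) := by
  obtain ⟨ρ, hρ, σ, hσ, hsat, hsrc, hact, htgt⟩ := hTr.2 _ _ _ h
  obtain ⟨f, x, hx, hform⟩ := (hL.2.2 ρ hρ).1.2
  have hfsq : f = sq := by
    rw [hform] at hsrc
    simp only [Tm.subst, binT] at hsrc
    injection hsrc
  have hsqf : sq = f := hfsq.symm
  subst hsqf
  obtain ⟨b, hcase⟩ := honly ρ hρ ⟨_, hform⟩
  rcases hcase with h1 | h2
  · subst h1
    have hact' : b = a := hact
    subst hact'
    have hsrc' : binT sq (σ 0) (σ 1) = binT sq t u := by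
      have e : (seqRule1 (ar := ar) sq b).src = binT sq (.var 0) (.var 1) := rfl
      rw [e, subst_binT] at hsrc
      exact hsrc
    obtain ⟨h0, h1'⟩ := binT_inj har hsrc'
    have hpos : Tr (σ 0) b (σ 2) := hsat.1 rfl
    refine Or.inl ⟨σ 2, ?_, ?_⟩
    · rwa [h0] at hpos
    · rw [← htgt]
      have e : (seqRule1 (ar := ar) sq b).tgt = binT sq (.var 2) (.var 1) := rfl
      rw [e, subst_binT, show (Tm.var 1).subst σ = σ 1 from rfl, h1']
      rfl
  · subst h2
    have hact' : b = a := hact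
    subst hact'
    have hsrc' : binT sq (σ 0) (σ 1) = binT sq t u := by
      have e : (seqRule2 (ar := ar) sq b).src = binT sq (.var 0) (.var 1) := rfl
      rw [e, subst_binT] at hsrc
      exact hsrc
    obtain ⟨h0, h1'⟩ := binT_inj har hsrc'
    have hpos : Tr (σ 1) b (σ 2) := hsat.1 rfl
    refine Or.inr ⟨?_, ?_⟩
    · intro c w hw
      rw [← h0] at hw
      exact hsat.2 (rfl : ((0, c) : ℕ × Act).1 = 0) w hw
    · rw [← htgt]
      show Tr u b (σ 2)
      rwa [h1'] at hpos

lemma seq_stuck {L : Lang Op ar Act} (hL : L.WellFormed)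
    {Tr : Tm Op ar → Act → Tm Op ar → Prop} (hTr : IsTransRel L Tr)
    {sq : Op} (har : ar sq = 2)
    (honly : ∀ ρ ∈ L.rules, ρ.PrincipalIs sq →
      ∃ a : Act, ρ = seqRule1 sq a ∨ ρ = seqRule2 sq a)
    {t u : Tm Op ar}
    (hst : ∀ b w, ¬ Tr t b w) (hsu : ∀ b w, ¬ Tr u b w) :
    ∀ b w, ¬ Tr (binT sq t u) b w := by
  intro b w hw
  rcases seq_fwd hL hTr har honly hw with ⟨t', h', _⟩ | ⟨_, h'⟩
  · exact hst b t' h'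
  · exact hsu b w h'

end AssocAux

/-- Associativity of sequencing: in any GSOS language
containing the sequencing operation, `Algbis(G) ⊨ (x;y);z = x;(y;z)`; in
particular `(p;q);r ↔ p;(q;r)` for all closed `Σ_G`-terms `p`, `q`, `r`. -/
theorem sequencing_assoc {Op : Type} {ar : Op → ℕ} {Act : Type}
    [Finite Act] [Nonempty Act]
    (L : Lang Op ar Act) (hL : L.WellFormed)
    (Tr : Tm Op ar → Act → Tm Op ar → Prop) (hTr : IsTransRel L Tr)
    (sq : Op) (hsq : sq ∈ L.ops) (har : ar sq = 2)
    (hmem : ∀ a : Act, seqRule1 sq a ∈ L.rules ∧ seqRule2 sq a ∈ L.rules)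
    (honly : ∀ ρ ∈ L.rules, ρ.PrincipalIs sq →
      ∃ a : Act, ρ = seqRule1 sq a ∨ ρ = seqRule2 sq a) :
    (∀ σ, ClosedSub L.ops σ →
      Bisim Tr ((binT sq (binT sq (.var 0) (.var 1)) (.var 2)).subst σ)
        ((binT sq (.var 0) (binT sq (.var 1) (.var 2))).subst σ)) ∧
    (∀ p q r : Tm Op ar,
      p.IsClosed → p.ops ⊆ L.ops → q.IsClosed → q.ops ⊆ L.ops →
      r.IsClosed → r.ops ⊆ L.ops →
      Bisim Tr (binT sq (binT sq p q) r) (binT sq p (binT sq q r))) := by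
  classical
  have bwd1 := fun {t u t' : Tm Op ar} {a : Act} ht hu ht' h =>
    seq_bwd1 (t := t) (u := u) (t' := t') (a := a) hTr (fun c => (hmem c).1) ht hu ht' h
  have bwd2 := fun {t u u' : Tm Op ar} {a : Act} ht hu hu' hs h =>
    seq_bwd2 (t := t) (u := u) (u' := u') (a := a) hTr (fun c => (hmem c).2) ht hu hu' hs h
  have key : ∀ p q r : Tm Op ar,
      (p.IsClosed ∧ p.ops ⊆ L.ops) → (q.IsClosed ∧ q.ops ⊆ L.ops) →
      (r.IsClosed ∧ r.ops ⊆ L.ops) →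
      Bisim Tr (binT sq (binT sq p q) r) (binT sq p (binT sq q r)) := by
    intro p q r hp hq hr
    refine ⟨fun P Q => P = Q ∨ ∃ p' q' r',
        (p'.IsClosed ∧ p'.ops ⊆ L.ops) ∧ (q'.IsClosed ∧ q'.ops ⊆ L.ops) ∧
        (r'.IsClosed ∧ r'.ops ⊆ L.ops) ∧
        ((P = binT sq (binT sq p' q') r' ∧ Q = binT sq p' (binT sq q' r')) ∨
         (Q = binT sq (binT sq p' q') r' ∧ P = binT sq p' (binT sq q' r'))),
      ⟨?_, ?_⟩, Or.inr ⟨p, q, r, hp, hq, hr, Or.inl ⟨rfl, rfl⟩⟩⟩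
    · intro P Q hPQ
      rcases hPQ with h | ⟨p', q', r', hp', hq', hr', h | h⟩
      · exact Or.inl h.symm
      · exact Or.inr ⟨p', q', r', hp', hq', hr', Or.inr h⟩
      · exact Or.inr ⟨p', q', r', hp', hq', hr', Or.inl h⟩
    · rintro P Q (rfl | ⟨p', q', r', hp', hq', hr', ⟨rfl, rfl⟩ | ⟨rfl, rfl⟩⟩) a P' hP'
      · exact ⟨P', hP', Or.inl rfl⟩
      · -- P = (p';q');r', Q = p';(q';r')
        rcases seq_fwd hL hTr har honly hP' with ⟨w, hw, rfl⟩ | ⟨hstuck, hrmove⟩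
        · rcases seq_fwd hL hTr har honly hw with ⟨p'', hp'', rfl⟩ | ⟨hps, hqm⟩
          · have g := trans_good hL hTr hp''
            exact ⟨binT sq p'' (binT sq q' r'),
              bwd1 hp' (good_binT hsq hq' hr') g hp'',
              Or.inr ⟨p'', q', r', g, hq', hr', Or.inl ⟨rfl, rfl⟩⟩⟩
          · have g := trans_good hL hTr hqm
            refine ⟨binT sq w r', ?_, Or.inl rfl⟩
            exact bwd2 hp' (good_binT hsq hq' hr') (good_binT hsq g hr') hps
              (bwd1 hq' hr' g hqm)
        · have hps : ∀ b w, ¬ Tr p' b w := fun b w hw =>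
            hstuck b _ (bwd1 hp' hq' (trans_good hL hTr hw) hw)
          have hqs : ∀ b w, ¬ Tr q' b w := fun b w hw =>
            hstuck b _ (bwd2 hp' hq' (trans_good hL hTr hw) hps hw)
          have g := trans_good hL hTr hrmove
          refine ⟨P', ?_, Or.inl rfl⟩
          exact bwd2 hp' (good_binT hsq hq' hr') g hps (bwd2 hq' hr' g hqs hrmove)
      · -- P = p';(q';r'), Q = (p';q');r'
        rcases seq_fwd hL hTr har honly hP' with ⟨p'', hp'', rfl⟩ | ⟨hps, hmove⟩
        · have g := trans_good hL hTr hp''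
          exact ⟨binT sq (binT sq p'' q') r',
            bwd1 (good_binT hsq hp' hq') hr' (good_binT hsq g hq')
              (bwd1 hp' hq' g hp''),
            Or.inr ⟨p'', q', r', g, hq', hr', Or.inr ⟨rfl, rfl⟩⟩⟩
        · rcases seq_fwd hL hTr har honly hmove with ⟨q'', hq'', rfl⟩ | ⟨hqs, hrmove⟩
          · have g := trans_good hL hTr hq''
            refine ⟨binT sq q'' r', ?_, Or.inl rfl⟩
            exact bwd1 (good_binT hsq hp' hq') hr' g (bwd2 hp' hq' g hps hq'')
          · have g := trans_good hL hTr hrmove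
            refine ⟨P', ?_, Or.inl rfl⟩
            exact bwd2 (good_binT hsq hp' hq') hr' g
              (seq_stuck hL hTr har honly hps hqs) hrmove
  refine ⟨fun σ hσ => ?_, fun p q r h1 h2 h3 h4 h5 h6 => key p q r ⟨h1, h2⟩ ⟨h3, h4⟩ ⟨h5, h6⟩⟩
  have e : ∀ t u : Tm Op ar, (binT sq t u).subst σ = binT sq (t.subst σ) (u.subst σ) :=
    fun t u => subst_binT sq t u σ
  rw [e, e, e, e]
  exact key (σ 0) (σ 1) (σ 2) (hσ 0) (hσ 1) (hσ 2)


end GSOSPaper
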